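/- arXiv:2004.01412 — 8 statements merged into one kernel-verified Lean document; each statement's English description precedes it below -/
import Mathlib

section
/- The function f(x) = 2·csc(π/x) + 2·csc(π/(n−x)) is decreasing on the interval [2, n/2], for any real n > 4. -/
open Real

noncomputable def G1 (t : ℝ) : ℝ := 2*π*Real.cos (π/t) / (t^2 * Real.sin (π/t)^2)

noncomputable def G2 (t : ℝ) : ℝ :=
  2*π*((π/t)*(Real.sin (π/t)^2 + 2*Real.cos (π/t)^2) - 2*Real.sin (π/t)*Real.cos (π/t)) /
    (t^3 * Real.sin (π/t)^3)

lemma hasDerivAt_pi_div (t : ℝ) (ht : t ≠ 0) : HasDerivAt (fun x : ℝ => π/x) (-π/t^2) t := by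
  have h := (hasDerivAt_inv ht).const_mul π
  have hfe : (fun x : ℝ => π/x) = fun x => π * x⁻¹ := by
    funext x; rw [div_eq_mul_inv]
  rw [hfe]
  refine h.congr_deriv ?_
  field_simp

lemma sin_pi_div_pos (t : ℝ) (ht : 1 < t) : 0 < Real.sin (π/t) := by
  have hpi := Real.pi_pos
  apply Real.sin_pos_of_pos_of_lt_pi
  · positivity
  · rw [div_lt_iff₀ (by linarith)]
    nlinarith

lemma hasDerivAt_G (t : ℝ) (ht : 1 < t) :
    HasDerivAt (fun x : ℝ => 2 * (1 / Real.sin (π / x))) (G1 t) t := by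
  have ht0 : t ≠ 0 := by linarith
  have hs := sin_pi_div_pos t ht
  have h1 := hasDerivAt_pi_div t ht0
  have h2 : HasDerivAt (fun x : ℝ => Real.sin (π/x)) (Real.cos (π/t) * (-π/t^2)) t :=
    (Real.hasDerivAt_sin _).comp t h1
  have h3 := (h2.inv hs.ne').const_mul 2
  simp only [one_div]
  refine h3.congr_deriv ?_
  unfold G1; field_simp

lemma hasDerivAt_G1 (t : ℝ) (ht : 1 < t) : HasDerivAt G1 (G2 t) t := by
  have ht0 : t ≠ 0 := by linarith
  have hs := sin_pi_div_pos t ht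
  have h1 := hasDerivAt_pi_div t ht0
  have h2 : HasDerivAt (fun x : ℝ => Real.sin (π/x)) (Real.cos (π/t) * (-π/t^2)) t :=
    (Real.hasDerivAt_sin _).comp t h1
  have hN : HasDerivAt (fun x : ℝ => 2*π*Real.cos (π/x)) (2*π*(-Real.sin (π/t) * (-π/t^2))) t := by
    have := ((Real.hasDerivAt_cos _).comp t h1).const_mul (2*π)
    exact this
  have hD : HasDerivAt (fun x : ℝ => x^2 * Real.sin (π/x)^2)
      ((2*t^1) * Real.sin (π/t)^2 + t^2 * (2 * Real.sin (π/t)^1 * (Real.cos (π/t) * (-π/t^2)))) t :=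
    (hasDerivAt_pow 2 t).mul (h2.pow 2)
  have hDne : t^2 * Real.sin (π/t)^2 ≠ 0 := by positivity
  have h := hN.div hD hDne
  refine h.congr_deriv ?_
  unfold G2
  field_simp
  ring

lemma G2_pos (t : ℝ) (ht : 2 < t) : 0 < G2 t := by
  have hpi := Real.pi_pos
  have ht0 : (0:ℝ) < t := by linarith
  have hu0 : 0 < π/t := by positivity
  have hu2 : π/t < π/2 := by rw [div_lt_div_iff₀ ht0 two_pos]; nlinarith
  have hs : 0 < Real.sin (π/t) := sin_pi_div_pos t (by linarith)
  have hc : 0 < Real.cos (π/t) := Real.cos_pos_of_mem_Ioo ⟨by linarith, hu2⟩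
  have hlt : Real.sin (π/t) < π/t := Real.sin_lt hu0
  have hpy := Real.sin_sq_add_cos_sq (π/t)
  have hnum : 0 < (π/t)*(Real.sin (π/t)^2 + 2*Real.cos (π/t)^2) - 2*Real.sin (π/t)*Real.cos (π/t) := by
    nlinarith [sq_nonneg (1 - Real.cos (π/t)), mul_pos (sub_pos.2 hlt) hc]
  unfold G2
  positivity

lemma G1_strictMono : StrictMonoOn G1 (Set.Ici 2) := by
  apply strictMonoOn_of_deriv_pos (convex_Ici 2)
  · intro t ht
    exact (hasDerivAt_G1 t (by simp at ht; linarith)).continuousAt.continuousWithinAt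
  · intro t ht
    rw [interior_Ici] at ht
    rw [(hasDerivAt_G1 t (by simp at ht; linarith)).deriv]
    exact G2_pos t ht

theorem csc_sum_decr (n : ℝ) (hn : n > 4) :
    StrictAntiOn (fun x : ℝ => 2 * (1 / Real.sin (π / x)) + 2 * (1 / Real.sin (π / (n - x))))
      (Set.Icc 2 (n / 2)) := by
  have key : ∀ x : ℝ, 1 < x → 1 < n - x →
      HasDerivAt (fun x : ℝ => 2 * (1 / Real.sin (π / x)) + 2 * (1 / Real.sin (π / (n - x))))
        (G1 x - G1 (n - x)) x := by
    intro x hx1 hx2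
    have h1 := hasDerivAt_G x hx1
    have hlin : HasDerivAt (fun y : ℝ => n - y) (-1) x := (hasDerivAt_id x).const_sub n
    have h2 := (hasDerivAt_G (n - x) hx2).comp x hlin
    have h := h1.add h2
    refine h.congr_deriv ?_
    ring
  apply strictAntiOn_of_deriv_neg (convex_Icc 2 (n/2))
  · intro x hx
    obtain ⟨hx1, hx2⟩ := hx
    exact (key x (by linarith) (by linarith)).continuousAt.continuousWithinAt
  · intro x hx
    rw [interior_Icc] at hx
    obtain ⟨hx1, hx2⟩ := hx
    rw [(key x (by linarith) (by linarith)).deriv]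
    have h := G1_strictMono (Set.mem_Ici.2 (by linarith : (2:ℝ) ≤ x))
      (Set.mem_Ici.2 (by linarith : (2:ℝ) ≤ n - x)) (by linarith : x < n - x)
    linarith
end

section
/- The function f(x) = 2·csc(π/x) + 2·cot(π/(n−x)) is decreasing on the interval [2, n−2], for any real n > 4. -/
open Real

lemma keyA {u : ℝ} (hu : 0 < u) (hu2 : u < π/2) : u^2 * Real.cos u < Real.sin u ^ 2 := by
  have hpi := Real.pi_lt_d2
  have ht : 0 < u/2 := by linarith
  have ht1 : u/2 ≤ 1 := by linarith
  have ht8 : u/2 < 0.8 := by linarith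
  have hs1 : Real.sin (u/2) < u/2 := Real.sin_lt ht
  have hs2 : u/2 - (u/2)^3/4 < Real.sin (u/2) := by
    have h := Real.sin_gt_sub_cube ht; have : 0 < (u/2)^3 := pow_pos ht 3; linarith
  have hsq : (u/2)^2 ≤ 1 := by nlinarith
  have hcube : (u/2)^3 ≤ u/2 := by
    have := mul_le_mul_of_nonneg_left hsq ht.le; nlinarith
  have hsp : 0 < Real.sin (u/2) := by linarith
  have hsin : Real.sin u = 2 * Real.sin (u/2) * Real.cos (u/2) := by
    rw [← Real.sin_two_mul]; ring_nf
  have hcos : Real.cos u = 1 - 2 * Real.sin (u/2)^2 := by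
    have h := Real.cos_two_mul (u/2)
    have h2 : 2*(u/2) = u := by ring
    rw [h2] at h
    have := Real.sin_sq_add_cos_sq (u/2); linarith
  have hpyth := Real.sin_sq_add_cos_sq (u/2)
  rw [hsin, hcos]
  set t := u/2 with htdef
  set s := Real.sin t with hs
  have hu4 : u = 2*t := by rw [htdef]; ring
  rw [hu4]
  have hst : s^2 ≤ t^2 := by nlinarith
  have h4 : s^2 * s^2 ≤ s^2 * t^2 := mul_le_mul_of_nonneg_left hst (sq_nonneg s)
  have hapos : 0 < t - t^3/4 := by linarith
  have ha2 : (t - t^3/4)^2 ≤ s^2 := by nlinarith [mul_nonneg (by linarith : (0:ℝ) ≤ s - (t - t^3/4)) (by linarith : (0:ℝ) ≤ s + (t - t^3/4))]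
  have ha : (t - t^3/4)^2*(1+t^2) ≤ s^2*(1+t^2) :=
    mul_le_mul_of_nonneg_right ha2 (by positivity)
  have hfin : 0 < t^4*(1/2 - 7*t^2/16) := by
    apply mul_pos (pow_pos ht 4); nlinarith
  nlinarith [h4, ha, hfin, pow_pos ht 8, pow_pos ht 6]

set_option maxHeartbeats 1000000 in
theorem csc_cot_sum_decr (n : ℝ) (hn : n > 4) :
    StrictAntiOn (fun x : ℝ => 2 * (1 / Real.sin (π / x)) + 2 * Real.cot (π / (n - x)))
      (Set.Icc 2 (n - 2)) := by
  have hpi := Real.pi_pos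
  have hpi2 := Real.pi_le_four
  have hfeq : (fun x : ℝ => 2 * (1 / Real.sin (π / x)) + 2 * Real.cot (π / (n - x)))
      = (fun x : ℝ => 2 * (1 / Real.sin (π / x)) + 2 * (Real.cos (π / (n - x)) / Real.sin (π / (n - x)))) := by
    funext x; rw [Real.cot_eq_cos_div_sin]
  rw [hfeq]
  apply strictAntiOn_of_deriv_neg (convex_Icc _ _)
  · -- continuity
    apply ContinuousOn.add
    · apply ContinuousOn.mul continuousOn_const
      apply ContinuousOn.div continuousOn_const
      · exact Real.continuous_sin.comp_continuousOn
          (continuousOn_const.div continuousOn_id (fun x hx => by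
            have := hx.1; intro h; rw [h] at this; linarith))
      · intro x hx
        obtain ⟨hx1, hx2⟩ := hx
        have hx0 : (0:ℝ) < x := by linarith
        have h1 : 0 < π / x := div_pos hpi hx0
        have h2 : π / x < π := by
          rw [div_lt_iff₀ hx0]; nlinarith
        exact ne_of_gt (Real.sin_pos_of_pos_of_lt_pi h1 h2)
    · apply ContinuousOn.mul continuousOn_const
      have hc : ContinuousOn (fun x : ℝ => π / (n - x)) (Set.Icc 2 (n-2)) := by
        apply continuousOn_const.div (continuousOn_const.sub continuousOn_id)
        intro x hx
        have := hx.2; intro h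
        have : n - x = 0 := h
        linarith [hx.2]
      apply ContinuousOn.div
      · exact Real.continuous_cos.comp_continuousOn hc
      · exact Real.continuous_sin.comp_continuousOn hc
      · intro x hx
        obtain ⟨hx1, hx2⟩ := hx
        have hnx : (0:ℝ) < n - x := by linarith
        have h1 : 0 < π / (n - x) := div_pos hpi hnx
        have h2 : π / (n - x) < π := by
          rw [div_lt_iff₀ hnx]; nlinarith
        exact ne_of_gt (Real.sin_pos_of_pos_of_lt_pi h1 h2)
  · -- derivative negative on interior
    rw [interior_Icc]
    intro x hx
    obtain ⟨hx1, hx2⟩ := hx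
    have hx0 : (0:ℝ) < x := by linarith
    have hxne : x ≠ 0 := ne_of_gt hx0
    have hnx : (0:ℝ) < n - x := by linarith
    have hnxne : n - x ≠ 0 := ne_of_gt hnx
    set u := π / x with hu
    set v := π / (n - x) with hv
    have hu0 : 0 < u := div_pos hpi hx0
    have hu2 : u < π / 2 := by
      rw [hu, div_lt_div_iff₀ hx0 two_pos]; nlinarith
    have hv0 : 0 < v := div_pos hpi hnx
    have hv2 : v < π / 2 := by
      rw [hv, div_lt_div_iff₀ hnx two_pos]; nlinarith
    have hsu : 0 < Real.sin u := Real.sin_pos_of_pos_of_lt_pi hu0 (by linarith)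
    have hsv : 0 < Real.sin v := Real.sin_pos_of_pos_of_lt_pi hv0 (by linarith)
    have hcu : 0 < Real.cos u := Real.cos_pos_of_mem_Ioo ⟨by linarith, hu2⟩
    -- derivative of fun y => π / y at x
    have d1 : HasDerivAt (fun y : ℝ => π / y) (-(π / x ^ 2)) x := by
      have h := (hasDerivAt_inv hxne).const_mul π
      simpa [div_eq_mul_inv, mul_neg] using h
    have d2 : HasDerivAt (fun y : ℝ => Real.sin (π / y)) (Real.cos u * -(π / x ^ 2)) x :=
      by have h := (Real.hasDerivAt_sin u).comp x d1; exact h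
    have d4 : HasDerivAt (fun y : ℝ => 2 * (1 / Real.sin (π / y)))
        (2 * (-(Real.cos u * -(π / x ^ 2)) / Real.sin u ^ 2)) x := by
      have h := (d2.inv (ne_of_gt hsu)).const_mul 2
      simpa [one_div] using h
    -- derivative of fun y => π / (n - y) at x
    have d5 : HasDerivAt (fun y : ℝ => n - y) (-1) x := (hasDerivAt_id x).const_sub n
    have d6 : HasDerivAt (fun y : ℝ => π / (n - y)) (π / (n - x) ^ 2) x := by
      have h := (d5.inv hnxne).const_mul π
      have e : π * (- -1 / (n - x) ^ 2) = π / (n - x) ^ 2 := by ring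
      rw [e] at h
      simpa [div_eq_mul_inv] using h
    have d7 : HasDerivAt (fun y : ℝ => Real.cos (π / (n - y)))
        (-Real.sin v * (π / (n - x) ^ 2)) x := by have h := (Real.hasDerivAt_cos v).comp x d6; exact h
    have d8 : HasDerivAt (fun y : ℝ => Real.sin (π / (n - y)))
        (Real.cos v * (π / (n - x) ^ 2)) x := by have h := (Real.hasDerivAt_sin v).comp x d6; exact h
    have d9 : HasDerivAt (fun y : ℝ => 2 * (Real.cos (π / (n - y)) / Real.sin (π / (n - y))))
        (2 * ((-Real.sin v * (π / (n - x) ^ 2) * Real.sin v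
          - Real.cos v * (Real.cos v * (π / (n - x) ^ 2))) / Real.sin v ^ 2)) x :=
      (d7.div d8 (ne_of_gt hsv)).const_mul 2
    have dtot := d4.add d9
    have hderiv := dtot.deriv
    rw [show (fun x : ℝ => 2 * (1 / Real.sin (π / x)) + 2 * (Real.cos (π / (n - x)) / Real.sin (π / (n - x)))) = ((fun y : ℝ => 2 * (1 / Real.sin (π / y))) + fun y : ℝ => 2 * (Real.cos (π / (n - y)) / Real.sin (π / (n - y)))) from rfl, hderiv]
    -- simplify second numerator using Pythagoras
    have hpyth := Real.sin_sq_add_cos_sq v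
    have e2 : -Real.sin v * (π / (n - x) ^ 2) * Real.sin v
        - Real.cos v * (Real.cos v * (π / (n - x) ^ 2)) = -(π / (n - x) ^ 2) := by
      linear_combination (-(π / (n - x) ^ 2)) * hpyth
    rw [e2]
    -- key inequality
    have hA : u ^ 2 * Real.cos u < Real.sin u ^ 2 := keyA hu0 hu2
    have hBv : Real.sin v < v := Real.sin_lt hv0
    have hxu : x * u = π := by rw [hu]; field_simp
    have hnv : (n - x) * v = π := by rw [hv]; field_simp
    have hsune : Real.sin u ≠ 0 := ne_of_gt hsu
    have hsvne : Real.sin v ≠ 0 := ne_of_gt hsv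
    have key : Real.cos u * ((n - x) ^ 2 * Real.sin v ^ 2) < x ^ 2 * Real.sin u ^ 2 := by
      have k1 : x ^ 2 * (u ^ 2 * Real.cos u) < x ^ 2 * Real.sin u ^ 2 :=
        (mul_lt_mul_iff_right₀ (by positivity)).2 hA
      have k2 : x ^ 2 * u ^ 2 = π ^ 2 := by linear_combination (x * u + π) * hxu
      have k3 : (n - x) ^ 2 * Real.sin v ^ 2 < π ^ 2 := by
        have kv : (n - x) ^ 2 * v ^ 2 = π ^ 2 := by linear_combination ((n - x) * v + π) * hnv
        have hsv2 : Real.sin v ^ 2 < v ^ 2 := by nlinarith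
        have hm := (mul_lt_mul_iff_right₀ (show (0:ℝ) < (n - x) ^ 2 by positivity)).2 hsv2
        linarith
      have s1 : Real.cos u * ((n - x) ^ 2 * Real.sin v ^ 2) < Real.cos u * π ^ 2 :=
        (mul_lt_mul_iff_right₀ hcu).2 k3
      have s2 : Real.cos u * π ^ 2 = x ^ 2 * (u ^ 2 * Real.cos u) := by rw [← k2]; ring
      rw [s2] at s1
      linarith
    -- conclude
    have e1 : 2 * (-(Real.cos u * -(π / x ^ 2)) / Real.sin u ^ 2)
        = 2 * π * Real.cos u / (x ^ 2 * Real.sin u ^ 2) := by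
      field_simp
    have e3 : 2 * (-(π / (n - x) ^ 2) / Real.sin v ^ 2)
        = -(2 * π / ((n - x) ^ 2 * Real.sin v ^ 2)) := by
      field_simp
    rw [e1, e3]
    have hlt : 2 * π * Real.cos u / (x ^ 2 * Real.sin u ^ 2)
        < 2 * π / ((n - x) ^ 2 * Real.sin v ^ 2) := by
      rw [div_lt_div_iff₀ (by positivity) (by positivity)]
      have h2 := (mul_lt_mul_iff_right₀ (show (0:ℝ) < 2 * π by positivity)).2 key
      ring_nf at h2 ⊢
      linarith
    linarith
end

section
/- The function f(x) = (π/x²)·csc²(π/x) is decreasing on the interval [2, n−2], for any real n > 4. -/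
open Real

-- key: for 0 < x < y ≤ π, (x/y) * sin y < sin x (strict concavity of sin)
lemma sin_ratio_lt {x y : ℝ} (hx : 0 < x) (hxy : x < y) (hy : y ≤ π) :
    (x / y) * Real.sin y < Real.sin x := by
  have hy0 : 0 < y := hx.trans hxy
  have hmem0 : (0:ℝ) ∈ Set.Icc 0 π := ⟨le_refl 0, Real.pi_pos.le⟩
  have hmemy : y ∈ Set.Icc 0 π := ⟨hy0.le, hy⟩
  have ha' : 0 < 1 - x / y := by
    have : x / y < 1 := (div_lt_one hy0).2 hxy; linarith
  have hb' : 0 < x / y := by positivity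
  have h := strictConcaveOn_sin_Icc.2 hmem0 hmemy hy0.ne ha' hb' (by ring)
  simp only [smul_eq_mul, Real.sin_zero, mul_zero, zero_add] at h
  rw [div_mul_cancel₀ _ hy0.ne'] at h
  linarith
theorem csc_sq_over_sq_decr (n : ℝ) (hn : n > 4) :
    StrictAntiOn (fun x : ℝ => (π / x ^ 2) * (1 / Real.sin (π / x)) ^ 2)
      (Set.Icc 2 (n - 2)) := by
  intro a ha b hb hab
  obtain ⟨ha2, _⟩ := ha
  obtain ⟨hb2, _⟩ := hb
  have ha0 : (0:ℝ) < a := by linarith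
  have hb0 : (0:ℝ) < b := by linarith
  have hpi : (0:ℝ) < π := Real.pi_pos
  set ta := π / a with hta
  set tb := π / b with htb
  have htb0 : 0 < tb := by positivity
  have htba : tb < ta := by
    apply div_lt_div_of_pos_left hpi ha0 hab
  have htapi : ta ≤ π := by
    rw [hta, div_le_iff₀ ha0]; nlinarith
  have htane : ta ≠ π := by
    intro h
    rw [hta, div_eq_iff ha0.ne'] at h
    nlinarith
  have hsa : 0 < Real.sin ta := Real.sin_pos_of_pos_of_lt_pi (htb0.trans htba)
    (lt_of_le_of_ne htapi htane)
  have hkey : (tb / ta) * Real.sin ta < Real.sin tb :=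
    sin_ratio_lt htb0 htba htapi
  have hsb : 0 < Real.sin tb := Real.sin_pos_of_pos_of_lt_pi htb0
    (htba.trans_le htapi)
  -- from hkey: tb * sin ta < ta * sin tb
  have hta0 : 0 < ta := htb0.trans htba
  have h1 : tb * Real.sin ta < ta * Real.sin tb := by
    rw [div_mul_eq_mul_div, div_lt_iff₀ hta0] at hkey; linarith [hkey]
  -- goal: π/b^2 * (1/sin tb)^2 < π/a^2 * (1/sin ta)^2
  show π / b ^ 2 * (1 / Real.sin tb) ^ 2 < π / a ^ 2 * (1 / Real.sin ta) ^ 2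
  have hea : π / a ^ 2 = ta ^ 2 / π := by
    rw [hta]; field_simp
  have heb : π / b ^ 2 = tb ^ 2 / π := by
    rw [htb]; field_simp
  rw [hea, heb]
  rw [div_mul_eq_mul_div, div_mul_eq_mul_div, div_lt_div_iff₀ hpi hpi]
  have h2 : tb ^ 2 * Real.sin ta ^ 2 < ta ^ 2 * Real.sin tb ^ 2 := by
    nlinarith [mul_pos htb0 hsa, mul_pos hta0 hsb]
  have e1 : tb ^ 2 * (1 / Real.sin tb) ^ 2 * π * (Real.sin ta ^ 2 * Real.sin tb ^ 2)
      = π * (tb ^ 2 * Real.sin ta ^ 2) := by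
    field_simp
  have e2 : ta ^ 2 * (1 / Real.sin ta) ^ 2 * π * (Real.sin ta ^ 2 * Real.sin tb ^ 2)
      = π * (ta ^ 2 * Real.sin tb ^ 2) := by
    field_simp
  have hpos : 0 < Real.sin ta ^ 2 * Real.sin tb ^ 2 := by positivity
  rw [← mul_lt_mul_iff_of_pos_right hpos, e1, e2]
  exact mul_lt_mul_of_pos_left h2 hpi
end

section
/- For every integer n ≥ 6, the inequality 2·csc(2π/(n−2)) + 2·csc(2π/(n−2)) > 2·cot(π/(n−2)) > 2·cot(2π/(n−2)) + 2·cot(2π/(n−2)) holds. -/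
open Real

theorem stmt7 (n : ℤ) (hn : 6 ≤ n) :
    2 * (1 / Real.sin (2 * π / ((n : ℝ) - 2))) + 2 * (1 / Real.sin (2 * π / ((n : ℝ) - 2))) >
      2 * Real.cot (π / ((n : ℝ) - 2)) ∧
    2 * Real.cot (π / ((n : ℝ) - 2)) >
      2 * Real.cot (2 * π / ((n : ℝ) - 2)) + 2 * Real.cot (2 * π / ((n : ℝ) - 2)) := by
  have hm : (4:ℝ) ≤ (n:ℝ) - 2 := by
    have : (6:ℝ) ≤ (n:ℝ) := by exact_mod_cast hn
    linarith
  set x : ℝ := π / ((n : ℝ) - 2) with hxdef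
  have hπ := Real.pi_pos
  have hx0 : 0 < x := div_pos hπ (by linarith)
  have hx4 : x ≤ π / 4 := by
    apply div_le_div_of_nonneg_left (le_of_lt hπ) (by norm_num) hm
  have hxlt : x < π / 2 := lt_of_le_of_lt hx4 (by linarith)
  have hs : 0 < Real.sin x := Real.sin_pos_of_pos_of_lt_pi hx0 (by linarith)
  have hc : 0 < Real.cos x := Real.cos_pos_of_mem_Ioo ⟨by linarith, hxlt⟩
  have h2x : 2 * π / ((n : ℝ) - 2) = 2 * x := by rw [hxdef]; ring
  have hsin2 : Real.sin (2 * x) = 2 * Real.sin x * Real.cos x := Real.sin_two_mul x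
  have hcos2 : Real.cos (2 * x) = Real.cos x ^ 2 - Real.sin x ^ 2 := Real.cos_two_mul' x
  have hpyth : Real.sin x ^ 2 + Real.cos x ^ 2 = 1 := Real.sin_sq_add_cos_sq x
  have hsc : 0 < Real.sin x * Real.cos x := mul_pos hs hc
  have hcotx : Real.cot x = Real.cos x / Real.sin x := Real.cot_eq_cos_div_sin x
  have hcot2x : Real.cot (2 * x) = (Real.cos x ^ 2 - Real.sin x ^ 2) / (2 * Real.sin x * Real.cos x) := by
    rw [Real.cot_eq_cos_div_sin, hsin2, hcos2]
  constructor
  · rw [h2x, hsin2, hcotx, gt_iff_lt]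
    have h2 : 2 * (Real.cos x / Real.sin x) = 2 * Real.cos x / Real.sin x := by ring
    have hstep : (2 * (1 / (2 * Real.sin x * Real.cos x)) + 2 * (1 / (2 * Real.sin x * Real.cos x)))
        = 2 / (Real.sin x * Real.cos x) := by
      field_simp
      ring
    rw [hstep, h2, div_lt_div_iff₀ hs hsc]
    nlinarith [mul_pos hs (mul_pos hs hs)]
  · rw [h2x, hcotx, hcot2x, gt_iff_lt]
    have hstep : (2 * ((Real.cos x ^ 2 - Real.sin x ^ 2) / (2 * Real.sin x * Real.cos x))
        + 2 * ((Real.cos x ^ 2 - Real.sin x ^ 2) / (2 * Real.sin x * Real.cos x)))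
        = 2 * (Real.cos x ^ 2 - Real.sin x ^ 2) / (Real.sin x * Real.cos x) := by
      field_simp
      ring
    rw [hstep]
    have h2 : 2 * (Real.cos x / Real.sin x) = 2 * Real.cos x / Real.sin x := by ring
    rw [h2, div_lt_div_iff₀ hsc hs]
    nlinarith [mul_pos hs (mul_pos hs hs)]
end

section
/- For every integer n ≥ 8, the inequality 2·csc(2π/(n−4)) + 2·csc(2π/n) > 2·cot(π/(n−2)) > 2·cot(2π/(n−4)) + 2·cot(2π/n) holds. -/
open Real

/-- `1/x - cot x` is strictly increasing on `(0, π/2]`. -/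
lemma g_mono {s t : ℝ} (hs : 0 < s) (hst : s < t) (ht : t ≤ π / 2) :
    1 / s - Real.cot s < 1 / t - Real.cot t := by
  have hmono : StrictMonoOn (fun x : ℝ => 1 / x - Real.cos x / Real.sin x) (Set.Icc s t) := by
    apply strictMonoOn_of_deriv_pos (convex_Icc s t)
    · apply ContinuousOn.sub
      · exact continuousOn_const.div continuousOn_id fun x hx => ne_of_gt (lt_of_lt_of_le hs hx.1)
      · apply Real.continuousOn_cos.div Real.continuousOn_sin
        intro x hx
        have h1 : 0 < x := lt_of_lt_of_le hs hx.1
        have h2 : x < π := lt_of_le_of_lt (hx.2.trans ht) (by linarith [Real.pi_pos])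
        exact ne_of_gt (Real.sin_pos_of_pos_of_lt_pi h1 h2)
    · intro x hx
      rw [interior_Icc] at hx
      have h1 : 0 < x := hs.trans hx.1
      have h2 : x < π := lt_of_le_of_lt ((le_of_lt hx.2).trans ht) (by linarith [Real.pi_pos])
      have hsin : 0 < Real.sin x := Real.sin_pos_of_pos_of_lt_pi h1 h2
      have hd1 : HasDerivAt (fun x : ℝ => 1 / x) (-(x ^ 2)⁻¹) x := by
        simpa [one_div] using hasDerivAt_inv (ne_of_gt h1)
      have hd2 : HasDerivAt (fun x : ℝ => Real.cos x / Real.sin x)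
          ((-Real.sin x * Real.sin x - Real.cos x * Real.cos x) / Real.sin x ^ 2) x :=
        (Real.hasDerivAt_cos x).div (Real.hasDerivAt_sin x) (ne_of_gt hsin)
      have hd := hd1.sub hd2
      rw [show deriv (fun x : ℝ => 1 / x - Real.cos x / Real.sin x) x = _ from hd.deriv]
      have hsl : Real.sin x < x := Real.sin_lt h1
      have hsq : Real.sin x ^ 2 < x ^ 2 := by nlinarith
      have key : (Real.sin x ^ 2)⁻¹ > (x ^ 2)⁻¹ :=
        inv_strictAnti₀ (by positivity) hsq
      have hpyth : Real.sin x ^ 2 + Real.cos x ^ 2 = 1 := Real.sin_sq_add_cos_sq x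
      have : (-Real.sin x * Real.sin x - Real.cos x * Real.cos x) / Real.sin x ^ 2
          = -(Real.sin x ^ 2)⁻¹ := by
        field_simp
        nlinarith
      rw [this]
      linarith
  have := hmono (Set.left_mem_Icc.mpr (le_of_lt hst)) (Set.right_mem_Icc.mpr (le_of_lt hst)) hst
  simpa [Real.cot_eq_cos_div_sin] using this

/-- `cot x < 1/x` for `0 < x < π/2`. -/
lemma cot_lt_one_div {x : ℝ} (h1 : 0 < x) (h2 : x < π / 2) : Real.cot x < 1 / x := by
  have hcos : 0 < Real.cos x := Real.cos_pos_of_mem_Ioo ⟨by linarith [Real.pi_pos], h2⟩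
  have hsin : 0 < Real.sin x := Real.sin_pos_of_pos_of_lt_pi h1 (by linarith [Real.pi_pos])
  have htan := Real.lt_tan h1 h2
  rw [Real.tan_eq_sin_div_cos] at htan
  rw [Real.cot_eq_cos_div_sin, div_lt_div_iff₀ hsin h1]
  rw [lt_div_iff₀ hcos] at htan
  nlinarith

theorem stmt8 (n : ℤ) (hn : 8 ≤ n) :
    2 * (1 / Real.sin (2 * π / ((n : ℝ) - 4))) + 2 * (1 / Real.sin (2 * π / (n : ℝ))) >
      2 * Real.cot (π / ((n : ℝ) - 2)) ∧
    2 * Real.cot (π / ((n : ℝ) - 2)) >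
      2 * Real.cot (2 * π / ((n : ℝ) - 4)) + 2 * Real.cot (2 * π / (n : ℝ)) := by
  have hN : (8 : ℝ) ≤ (n : ℝ) := by exact_mod_cast hn
  have hpi := Real.pi_pos
  set N : ℝ := (n : ℝ) with hNdef
  set a : ℝ := 2 * π / (N - 4) with ha
  set b : ℝ := 2 * π / N with hb
  set c : ℝ := π / (N - 2) with hc
  have hN4 : (0:ℝ) < N - 4 := by linarith
  have hN2 : (0:ℝ) < N - 2 := by linarith
  have hN0 : (0:ℝ) < N := by linarith
  have ha0 : 0 < a := by positivity
  have hb0 : 0 < b := by positivity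
  have hc0 : 0 < c := by positivity
  have hale : a ≤ π / 2 := by
    rw [ha, div_le_div_iff₀ hN4 two_pos]; nlinarith
  have hblt : b < π / 2 := by
    rw [hb, div_lt_div_iff₀ hN0 two_pos]; nlinarith
  have hclt : c < π / 2 := by
    rw [hc, div_lt_div_iff₀ hN2 two_pos]; nlinarith
  have hca : c < a := by
    rw [hc, ha, div_lt_div_iff₀ hN2 hN4]; nlinarith
  have heq : 1 / a + 1 / b = 1 / c := by
    rw [ha, hb, hc]
    field_simp
    ring
  have hsa : 0 < Real.sin a := Real.sin_pos_of_pos_of_lt_pi ha0 (by linarith)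
  have hsb : 0 < Real.sin b := Real.sin_pos_of_pos_of_lt_pi hb0 (by linarith)
  have hcsca : 1 / a < 1 / Real.sin a := one_div_lt_one_div_of_lt hsa (Real.sin_lt ha0)
  have hcscb : 1 / b < 1 / Real.sin b := one_div_lt_one_div_of_lt hsb (Real.sin_lt hb0)
  have hcotc : Real.cot c < 1 / c := cot_lt_one_div hc0 hclt
  have hcotb : Real.cot b < 1 / b := cot_lt_one_div hb0 hblt
  have hg : 1 / c - Real.cot c < 1 / a - Real.cot a := g_mono hc0 hca hale
  constructor
  · linarith
  · linarith
end

section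
/- For every integer n ≥ 22, the inequality 2·cot(π/6) + 2·cot(π/(n−6)) > 2·csc(π/2) + 2·csc(π/(n−4)) > 2·cot(π/4) + 2·cot(π/(n−4)) holds. -/
open Real

private lemma sin_lb' {x : ℝ} (h0 : 0 ≤ x) (h1 : x ≤ 1) :
    x - x^3/6 - x^4*(5/96) ≤ Real.sin x := by
  have h := Real.sin_bound (x := x) (by rwa [abs_of_nonneg h0])
  rw [abs_of_nonneg h0] at h
  have := abs_sub_le_iff.mp h
  nlinarith [this.2, mul_le_mul_of_nonneg_left h1 (pow_nonneg h0 4)]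

private lemma sin_ub' {x : ℝ} (h0 : 0 ≤ x) (h1 : x ≤ 1) :
    Real.sin x ≤ x - x^3/6 + x^4*(5/96) := by
  have h := Real.sin_bound (x := x) (by rwa [abs_of_nonneg h0])
  rw [abs_of_nonneg h0] at h
  have := abs_sub_le_iff.mp h
  nlinarith [this.1, mul_le_mul_of_nonneg_left h1 (pow_nonneg h0 4)]

private lemma cos_lb' {x : ℝ} (h0 : 0 ≤ x) (h1 : x ≤ 1) :
    1 - x^2/2 - x^4*(5/96) ≤ Real.cos x := by
  have h := Real.cos_bound (x := x) (by rwa [abs_of_nonneg h0])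
  rw [abs_of_nonneg h0] at h
  have := abs_sub_le_iff.mp h
  linarith [this.2]

private lemma csc_ub {x : ℝ} (h0 : 0 < x) (hx : x ≤ 0.1654) :
    1 / Real.sin x ≤ 1 / x + 0.177 * x := by
  have hs := sin_lb' h0.le (by linarith)
  have b2 : x^2 ≤ 0.1654*x := by nlinarith
  have b3 : x^3 ≤ 0.1654*x^2 := by nlinarith [mul_nonneg (sub_nonneg.2 hx) (sq_nonneg x)]
  have b4 : x^4 ≤ 0.1654*x^3 := by nlinarith [mul_nonneg (sub_nonneg.2 hx) (pow_nonneg h0.le 3)]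
  have b5 : x^5 ≤ 0.1654*x^4 := by nlinarith [mul_nonneg (sub_nonneg.2 hx) (pow_nonneg h0.le 4)]
  have b6 : x^6 ≤ 0.1654*x^5 := by nlinarith [mul_nonneg (sub_nonneg.2 hx) (pow_nonneg h0.le 5)]
  have p2 : (0:ℝ) ≤ x^2 := sq_nonneg x
  have p3 : (0:ℝ) ≤ x^3 := pow_nonneg h0.le 3
  have p4 : (0:ℝ) ≤ x^4 := pow_nonneg h0.le 4
  have p5 : (0:ℝ) ≤ x^5 := pow_nonneg h0.le 5
  have hD : 0 < x - x^3/6 - x^4*(5/96) := by nlinarith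
  have hsin : 0 < Real.sin x := lt_of_lt_of_le hD hs
  have h1 : 1 / Real.sin x ≤ 1 / (x - x^3/6 - x^4*(5/96)) :=
    one_div_le_one_div_of_le hD hs
  have h2 : 1 / (x - x^3/6 - x^4*(5/96)) ≤ (1 + 0.177 * x^2) / x := by
    rw [div_le_div_iff₀ hD h0]
    nlinarith
  have h3 : (1 + 0.177 * x^2) / x = 1 / x + 0.177 * x := by
    field_simp
  linarith

private lemma cot_lb {y : ℝ} (h0 : 0 < y) (hy : y ≤ 0.1848) :
    1 / y - 0.35 * y ≤ Real.cot y := by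
  have hs := sin_ub' h0.le (by linarith)
  have hc := cos_lb' h0.le (by linarith)
  have b2 : y^2 ≤ 0.1848*y := by nlinarith
  have b3 : y^3 ≤ 0.1848*y^2 := by nlinarith [mul_nonneg (sub_nonneg.2 hy) (sq_nonneg y)]
  have b4 : y^4 ≤ 0.1848*y^3 := by nlinarith [mul_nonneg (sub_nonneg.2 hy) (pow_nonneg h0.le 3)]
  have b5 : y^5 ≤ 0.1848*y^4 := by nlinarith [mul_nonneg (sub_nonneg.2 hy) (pow_nonneg h0.le 4)]
  have p2 : (0:ℝ) ≤ y^2 := sq_nonneg y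
  have p3 : (0:ℝ) ≤ y^3 := pow_nonneg h0.le 3
  have p4 : (0:ℝ) ≤ y^4 := pow_nonneg h0.le 4
  have p5 : (0:ℝ) ≤ y^5 := pow_nonneg h0.le 5
  have hsin : 0 < Real.sin y :=
    Real.sin_pos_of_pos_of_lt_pi h0 (by nlinarith [Real.pi_gt_three])
  rw [Real.cot_eq_cos_div_sin, le_div_iff₀ hsin]
  have hyinv : (1:ℝ)/0.1848 ≤ 1/y := one_div_le_one_div_of_le h0 hy
  have hfac : 0 ≤ 1 / y - 0.35 * y := by
    have h6 : (0.35:ℝ) * y ≤ 0.35 * 0.1848 := by linarith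
    have h5 : (5:ℝ) ≤ (1:ℝ)/0.1848 := by norm_num
    linarith
  have step : (1 / y - 0.35 * y) * Real.sin y ≤ (1 / y - 0.35 * y) * (y - y^3/6 + y^4*(5/96)) :=
    mul_le_mul_of_nonneg_left hs hfac
  have expand : (1 / y - 0.35 * y) * (y - y^3/6 + y^4*(5/96))
      = 1 - y^2/6 + y^3*(5/96) - 0.35*y^2 + 0.35*y^4/6 - 0.35*y^5*(5/96) := by
    field_simp; ring
  rw [expand] at step
  nlinarith

private lemma sqrt3_lb : (1.7320508 : ℝ) ≤ Real.sqrt 3 := by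
  nlinarith [Real.sq_sqrt (by norm_num : (0:ℝ) ≤ 3), Real.sqrt_nonneg 3]

private lemma key1 {x y : ℝ} (hx0 : 0 < x) (hy0 : 0 < y)
    (hx : x ≤ 0.1654) (hy : y ≤ 0.1848) (hxy : 1/x - 1/y ≤ 0.63663) :
    1 + 1 / Real.sin x < Real.sqrt 3 + Real.cot y := by
  have h1 := csc_ub hx0 hx
  have h2 := cot_lb hy0 hy
  have h3 := sqrt3_lb
  linarith

private lemma sin18_lb : (0.1736409:ℝ) ≤ Real.sin (π/18) := by
  have hpi := Real.pi_gt_d6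
  have hpi' := Real.pi_lt_d6
  have h2u : π/18 = 2 * (π/36) := by ring
  rw [h2u, Real.sin_two_mul]
  have hul : (0.0872664:ℝ) ≤ π/36 := by linarith
  have huu : π/36 ≤ (0.0872665:ℝ) := by linarith
  have hsl : Real.sin 0.0872664 ≤ Real.sin (π/36) := by
    apply Real.sin_le_sin_of_le_of_le_pi_div_two _ _ hul
    · linarith [Real.pi_gt_three]
    · linarith [Real.pi_gt_three]
  have hcl : Real.cos 0.0872665 ≤ Real.cos (π/36) :=
    Real.cos_le_cos_of_nonneg_of_le_pi (by linarith) (by linarith) huu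
  have hs' := sin_lb' (by norm_num : (0:ℝ) ≤ 0.0872664) (by norm_num)
  have hc' := cos_lb' (by norm_num : (0:ℝ) ≤ 0.0872665) (by norm_num)
  have hnum1 : (0.0871526:ℝ) ≤ 0.0872664 - 0.0872664^3/6 - 0.0872664^4*(5/96) := by
    norm_num
  have hnum2 : (0.9961892:ℝ) ≤ 1 - 0.0872665^2/2 - 0.0872665^4*(5/96) := by
    norm_num
  have hsv : (0.0871526:ℝ) ≤ Real.sin (π/36) := by linarith
  have hcv : (0.9961892:ℝ) ≤ Real.cos (π/36) := by linarith
  have hmul : (0.0871526:ℝ) * 0.9961892 ≤ Real.sin (π/36) * Real.cos (π/36) :=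
    mul_le_mul hsv hcv (by norm_num) (by linarith)
  have hre : 2 * Real.sin (π/36) * Real.cos (π/36)
      = 2 * (Real.sin (π/36) * Real.cos (π/36)) := by ring
  rw [hre]
  have : (0.1736409:ℝ) ≤ 2 * (0.0871526 * 0.9961892) := by norm_num
  linarith

private lemma cot16_lb : (5.0270:ℝ) ≤ Real.cot (π/16) := by
  rw [Real.cot_eq_cos_div_sin, Real.cos_pi_div_sixteen, Real.sin_pi_div_sixteen]
  have hs2 : Real.sqrt 2 ^ 2 = 2 := Real.sq_sqrt (by norm_num)
  have hs2n := Real.sqrt_nonneg 2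
  have h2l : (1.4142135:ℝ) ≤ Real.sqrt 2 := by nlinarith [hs2, hs2n]
  have h2u : Real.sqrt 2 ≤ (1.4142136:ℝ) := by nlinarith [hs2, hs2n]
  set b := Real.sqrt (2 + Real.sqrt 2) with hbdef
  have hb2 : b ^ 2 = 2 + Real.sqrt 2 := Real.sq_sqrt (by linarith)
  have hbn : 0 ≤ b := Real.sqrt_nonneg _
  have hbl : (1.8477590:ℝ) ≤ b := by nlinarith [hb2, hbn]
  have hbu : b ≤ (1.8477591:ℝ) := by nlinarith [hb2, hbn]
  have hA2 : Real.sqrt (2 + b) ^ 2 = 2 + b := Real.sq_sqrt (by linarith)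
  have hAn : 0 ≤ Real.sqrt (2 + b) := Real.sqrt_nonneg _
  have hA : (1.9615705:ℝ) ≤ Real.sqrt (2 + b) := by nlinarith [hA2, hAn]
  have hB2 : Real.sqrt (2 - b) ^ 2 = 2 - b := Real.sq_sqrt (by linarith)
  have hBn : 0 ≤ Real.sqrt (2 - b) := Real.sqrt_nonneg _
  have hBp : 0 < Real.sqrt (2 - b) := by nlinarith [hB2, hBn]
  have hB : Real.sqrt (2 - b) ≤ (0.3901808:ℝ) := by nlinarith [hB2, hBn]
  rw [le_div_iff₀ (by positivity : (0:ℝ) < Real.sqrt (2 - b) / 2)]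
  nlinarith [hA, hB, hBn]

private lemma key22 : 1 + 1 / Real.sin (π/18) < Real.sqrt 3 + Real.cot (π/16) := by
  have h1 := sin18_lb
  have hpos : 0 < Real.sin (π/18) := by linarith
  have hcsc : 1 / Real.sin (π/18) ≤ 5.759012 := by
    rw [div_le_iff₀ hpos]; nlinarith
  linarith [cot16_lb, sqrt3_lb]

theorem stmt9 (n : ℤ) (hn : 22 ≤ n) :
    2 * Real.cot (π / 6) + 2 * Real.cot (π / ((n : ℝ) - 6)) >
      2 * (1 / Real.sin (π / 2)) + 2 * (1 / Real.sin (π / ((n : ℝ) - 4))) ∧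
    2 * (1 / Real.sin (π / 2)) + 2 * (1 / Real.sin (π / ((n : ℝ) - 4))) >
      2 * Real.cot (π / 4) + 2 * Real.cot (π / ((n : ℝ) - 4)) := by
  have hn' : (22:ℝ) ≤ (n:ℝ) := by exact_mod_cast hn
  have hpi := Real.pi_gt_d6
  have hpi' := Real.pi_lt_d6
  have hn4 : (0:ℝ) < (n:ℝ) - 4 := by linarith
  have hn6 : (0:ℝ) < (n:ℝ) - 6 := by linarith
  have hx0 : 0 < π / ((n:ℝ) - 4) := div_pos Real.pi_pos hn4
  have hy0 : 0 < π / ((n:ℝ) - 6) := div_pos Real.pi_pos hn6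
  have hcot6 : Real.cot (π/6) = Real.sqrt 3 := by
    rw [Real.cot_eq_cos_div_sin, Real.cos_pi_div_six, Real.sin_pi_div_six]
    ring
  have hcot4 : Real.cot (π/4) = 1 := by
    rw [Real.cot_eq_cos_div_sin, Real.cos_pi_div_four, Real.sin_pi_div_four]
    rw [div_self]
    positivity
  constructor
  · -- first inequality
    rw [hcot6, Real.sin_pi_div_two]
    have main : 1 + 1 / Real.sin (π / ((n:ℝ) - 4)) < Real.sqrt 3 + Real.cot (π / ((n:ℝ) - 6)) := by
      rcases eq_or_lt_of_le hn with heq | hlt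
      · have hne : (n:ℝ) = 22 := by exact_mod_cast heq.symm
        rw [hne, show ((22:ℝ)-4) = 18 by norm_num, show ((22:ℝ)-6) = 16 by norm_num]
        exact key22
      · have hn23 : (23:ℝ) ≤ (n:ℝ) := by
          have h23 : (23:ℤ) ≤ n := hlt
          exact_mod_cast h23
        apply key1 hx0 hy0
        · rw [div_le_iff₀ hn4]; nlinarith
        · rw [div_le_iff₀ hn6]; nlinarith
        · rw [one_div_div, one_div_div]
          have he : ((n:ℝ) - 4) / π - ((n:ℝ) - 6) / π = 2 / π := by ring
          rw [he, div_le_iff₀ Real.pi_pos]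
          nlinarith
    linarith
  · -- second inequality
    rw [hcot4, Real.sin_pi_div_two]
    have hlt_pi : π / ((n:ℝ) - 4) < π := by
      rw [div_lt_iff₀ hn4]; nlinarith [Real.pi_pos]
    have hsin : 0 < Real.sin (π / ((n:ℝ) - 4)) :=
      Real.sin_pos_of_pos_of_lt_pi hx0 hlt_pi
    have hcos : Real.cos (π / ((n:ℝ) - 4)) < 1 := by
      have h := Real.cos_lt_cos_of_nonneg_of_le_pi (le_refl 0) hlt_pi.le hx0
      simpa using h
    have hkey : Real.cot (π / ((n:ℝ) - 4)) < 1 / Real.sin (π / ((n:ℝ) - 4)) := by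
      rw [Real.cot_eq_cos_div_sin, div_lt_div_iff₀ hsin hsin]
      nlinarith
    linarith
end

section
/- For every integer n ≥ 22, it holds that 2·csc(π/(n−4)) − 2·cot(π/(n−6)) < 2√3 − 2. -/
open Real

private lemma sqrt3_ub : Real.sqrt 3 ≤ (1.7320509 : ℝ) := by
  nlinarith [Real.sq_sqrt (show (0:ℝ) ≤ 3 by norm_num), Real.sqrt_nonneg 3]

private lemma my_sin_lb {x a b r : ℝ} (ha : a ≤ x) (hb : x ≤ b) (h0 : 0 ≤ a) (h1 : b ≤ 1)
    (hr : r ≤ a - b ^ 3 / 6 - 5 / 96 * b ^ 4) : r ≤ Real.sin x := by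
  have h0x : 0 ≤ x := h0.trans ha
  have habs : |x| ≤ 1 := by rw [abs_of_nonneg h0x]; exact hb.trans h1
  have h := Real.sin_bound habs
  rw [abs_of_nonneg h0x] at h
  have h' := abs_sub_le_iff.1 h
  have h3 : x ^ 3 ≤ b ^ 3 := pow_le_pow_left₀ h0x hb 3
  have h4 : x ^ 4 ≤ b ^ 4 := pow_le_pow_left₀ h0x hb 4
  nlinarith [h'.2, mul_nonneg (pow_nonneg h0x 4) (sub_nonneg.2 (hb.trans h1))]

private lemma my_sin_ub {x a b r : ℝ} (ha : a ≤ x) (hb : x ≤ b) (h0 : 0 ≤ a) (h1 : b ≤ 1)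
    (hr : b - a ^ 3 / 6 + 5 / 96 * b ^ 4 ≤ r) : Real.sin x ≤ r := by
  have h0x : 0 ≤ x := h0.trans ha
  have habs : |x| ≤ 1 := by rw [abs_of_nonneg h0x]; exact hb.trans h1
  have h := Real.sin_bound habs
  rw [abs_of_nonneg h0x] at h
  have h' := abs_sub_le_iff.1 h
  have h3 : a ^ 3 ≤ x ^ 3 := pow_le_pow_left₀ h0 ha 3
  have h4 : x ^ 4 ≤ b ^ 4 := pow_le_pow_left₀ h0x hb 4
  nlinarith [h'.1, mul_nonneg (pow_nonneg h0x 4) (sub_nonneg.2 (hb.trans h1))]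

private lemma my_cos_lb {x b r : ℝ} (h0 : 0 ≤ x) (hb : x ≤ b)
    (hr : r ≤ 1 - b ^ 2 / 2) : r ≤ Real.cos x := by
  have h2 : x ^ 2 ≤ b ^ 2 := pow_le_pow_left₀ h0 hb 2
  nlinarith [Real.one_sub_sq_div_two_le_cos (x := x)]

private lemma my_cos_ub {x a b r : ℝ} (ha : a ≤ x) (hb : x ≤ b) (h0 : 0 ≤ a) (h1 : b ≤ 1)
    (hr : 1 - a ^ 2 / 2 + 5 / 96 * b ^ 4 ≤ r) : Real.cos x ≤ r := by
  have h0x : 0 ≤ x := h0.trans ha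
  have habs : |x| ≤ 1 := by rw [abs_of_nonneg h0x]; exact hb.trans h1
  have h := Real.cos_bound habs
  rw [abs_of_nonneg h0x] at h
  have h' := abs_sub_le_iff.1 h
  have h2 : a ^ 2 ≤ x ^ 2 := pow_le_pow_left₀ h0 ha 2
  have h4 : x ^ 4 ≤ b ^ 4 := pow_le_pow_left₀ h0x hb 4
  nlinarith [h'.1]

private lemma key_red {x y : ℝ} (hx : 0 < x) (hxp : x < π) (hy : 0 < y) (hyp : y < π)
    (h : 2 * Real.sin y - 2 * (Real.cos y * Real.sin x) <
      (2 * Real.sqrt 3 - 2) * (Real.sin x * Real.sin y)) :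
    2 * (1 / Real.sin x) - 2 * Real.cot y < 2 * Real.sqrt 3 - 2 := by
  have hsx := Real.sin_pos_of_pos_of_lt_pi hx hxp
  have hsy := Real.sin_pos_of_pos_of_lt_pi hy hyp
  rw [Real.cot_eq_cos_div_sin]
  rw [show 2 * (1 / Real.sin x) - 2 * (Real.cos y / Real.sin y)
      = (2 * Real.sin y - 2 * (Real.cos y * Real.sin x)) / (Real.sin x * Real.sin y) by
        field_simp]
  rw [div_lt_iff₀ (by positivity)]
  exact h

private lemma numeric_aux {sx sy cy A1 B2 C k : ℝ} (hs1 : A1 ≤ sx) (hs2 : sy ≤ B2) (hc : C ≤ cy)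
    (hsy0 : 0 ≤ sy) (hsx1 : sx ≤ 1) (hA : 0 ≤ A1) (hC : 0 ≤ C)
    (hk : 1.4641016 ≤ k) (hk2 : k ≤ 1.4641018)
    (hfin : B2 * (2 - 1.4641016 * A1) - 2 * (C * A1) < 0) :
    2 * sy - 2 * (cy * sx) < k * (sx * sy) := by
  have hsx0 : 0 ≤ sx := hA.trans hs1
  have h1 : 1.4641016 * A1 ≤ k * sx := mul_le_mul hk hs1 hA (by linarith)
  have h2 : 0 ≤ 2 - k * sx := by
    nlinarith [mul_nonneg (show (0:ℝ) ≤ 1.4641018 - k by linarith) hsx0]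
  have h3 : sy * (2 - k * sx) ≤ B2 * (2 - 1.4641016 * A1) :=
    mul_le_mul hs2 (by linarith) h2 (by linarith)
  have h4 : C * A1 ≤ cy * sx := mul_le_mul hc hs1 hA (hC.trans hc)
  nlinarith [h3, h4]

private lemma numeric_case {sx sy cy A1 B2 C : ℝ} (hs1 : A1 ≤ sx) (hs2 : sy ≤ B2) (hc : C ≤ cy)
    (hsy0 : 0 ≤ sy) (hsx1 : sx ≤ 1) (hA : 0 ≤ A1) (hC : 0 ≤ C)
    (hfin : B2 * (2 - 1.4641016 * A1) - 2 * (C * A1) < 0) :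
    2 * sy - 2 * (cy * sx) < (2 * Real.sqrt 3 - 2) * (sx * sy) :=
  numeric_aux hs1 hs2 hc hsy0 hsx1 hA hC (by linarith [sqrt3_lb]) (by linarith [sqrt3_ub]) hfin

set_option maxHeartbeats 1600000 in
private lemma general_ineq {X Y : ℝ} (hx0 : 0 < X) (hxy : X < Y) (hyb : Y ≤ 0.158)
    (hrel : π * (Y - X) = 2 * (X * Y)) :
    2 * Real.sin Y - 2 * (Real.cos Y * Real.sin X) <
      (2 * Real.sqrt 3 - 2) * (Real.sin X * Real.sin Y) := by
  have hpl := Real.pi_gt_d6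
  have hy0 : 0 < Y := hx0.trans hxy
  have hxb : X ≤ 0.158 := le_of_lt (lt_of_lt_of_le hxy hyb)
  have hx1 : X ≤ 1 := by linarith
  have hy1 : Y ≤ 1 := by linarith
  -- Taylor bounds
  have hs1 : X - X ^ 3 / 6 - 5 / 96 * X ^ 4 ≤ Real.sin X :=
    my_sin_lb le_rfl le_rfl hx0.le hx1 le_rfl
  have hs2l : Y - Y ^ 3 / 6 - 5 / 96 * Y ^ 4 ≤ Real.sin Y :=
    my_sin_lb le_rfl le_rfl hy0.le hy1 le_rfl
  have hs2u : Real.sin Y ≤ Y - Y ^ 3 / 6 + 5 / 96 * Y ^ 4 :=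
    my_sin_ub le_rfl le_rfl hy0.le hy1 le_rfl
  have hc2 : 1 - Y ^ 2 / 2 ≤ Real.cos Y := Real.one_sub_sq_div_two_le_cos
  -- power comparisons
  have hx2 : X ^ 2 ≤ 0.158 * X := by nlinarith
  have hy2 : Y ^ 2 ≤ 0.158 * Y := by nlinarith
  have hx2b : X ^ 2 ≤ 0.025 := by nlinarith
  have hy2b : Y ^ 2 ≤ 0.025 := by nlinarith
  have hx3 : X ^ 3 ≤ 0.025 * X := by
    nlinarith [mul_nonneg (sub_nonneg.2 hx2) hx0.le]
  have hy3 : Y ^ 3 ≤ 0.025 * Y := by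
    nlinarith [mul_nonneg (sub_nonneg.2 hy2) hy0.le]
  have hx4 : X ^ 4 ≤ 0.025 * X ^ 2 := by
    nlinarith [mul_nonneg (sub_nonneg.2 hx2b) (sq_nonneg X)]
  have hy4 : Y ^ 4 ≤ 0.025 * Y ^ 2 := by
    nlinarith [mul_nonneg (sub_nonneg.2 hy2b) (sq_nonneg Y)]
  have hL1pos : 0 < X - X ^ 3 / 6 - 5 / 96 * X ^ 4 := by nlinarith [hx3, hx4, hx2, hx0]
  have hL2pos : 0 < Y - Y ^ 3 / 6 - 5 / 96 * Y ^ 4 := by nlinarith [hy3, hy4, hy2, hy0]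
  have hLcpos : (0 : ℝ) ≤ 1 - Y ^ 2 / 2 := by nlinarith [hy2b]
  have hsx0 : 0 ≤ Real.sin X := le_trans hL1pos.le hs1
  have hk : (1.4641016 : ℝ) ≤ 2 * Real.sqrt 3 - 2 := by linarith [sqrt3_lb]
  have hstep1 : (1 - Y ^ 2 / 2) * (X - X ^ 3 / 6 - 5 / 96 * X ^ 4) ≤ Real.cos Y * Real.sin X :=
    mul_le_mul hc2 hs1 hL1pos.le (hLcpos.trans hc2)
  have hstep2 : (X - X ^ 3 / 6 - 5 / 96 * X ^ 4) * (Y - Y ^ 3 / 6 - 5 / 96 * Y ^ 4) ≤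
      Real.sin X * Real.sin Y :=
    mul_le_mul hs1 hs2l hL2pos.le hsx0
  have hstep3 : 1.4641016 * ((X - X ^ 3 / 6 - 5 / 96 * X ^ 4) * (Y - Y ^ 3 / 6 - 5 / 96 * Y ^ 4))
      ≤ (2 * Real.sqrt 3 - 2) * (Real.sin X * Real.sin Y) :=
    mul_le_mul hk hstep2 (mul_nonneg hL1pos.le hL2pos.le) (by linarith)
  have hrel2 : 2 * Y - 2 * X < 1.2732399 * (X * Y) := by
    have h := mul_pos (show (0:ℝ) < π - 3.141592 by linarith) (show (0:ℝ) < Y - X by linarith)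
    nlinarith [hrel, h, mul_pos hx0 hy0]
  -- monomial comparison facts
  have c1 : X ^ 3 ≤ X * Y ^ 2 := by
    have h := mul_nonneg hx0.le (mul_nonneg (sub_nonneg.2 hxy.le) (show (0:ℝ) ≤ Y + X by linarith))
    nlinarith [h]
  have c2 : X * Y ^ 2 ≤ 0.158 * (X * Y) := by
    nlinarith [mul_nonneg (mul_nonneg hx0.le hy0.le) (sub_nonneg.2 hyb)]
  have c3 : X * Y ^ 3 ≤ 0.158 * (X * Y ^ 2) := by
    nlinarith [mul_nonneg (mul_nonneg hx0.le (sq_nonneg Y)) (sub_nonneg.2 hyb)]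
  have c4 : X * Y ^ 2 ≤ Y ^ 3 := by
    nlinarith [mul_nonneg (sq_nonneg Y) (sub_nonneg.2 hxy.le)]
  have c5 : Y ^ 4 ≤ 0.158 * Y ^ 3 := by
    nlinarith [mul_nonneg (mul_nonneg hy0.le (sq_nonneg Y)) (sub_nonneg.2 hyb)]
  have c6 : X ^ 4 ≤ 0.158 * X ^ 3 := by
    nlinarith [mul_nonneg (mul_nonneg hx0.le (sq_nonneg X)) (sub_nonneg.2 hxb)]
  have c7 : X ^ 3 * Y ≤ X * Y ^ 3 := by
    have h := mul_nonneg (mul_nonneg hx0.le hy0.le) (mul_nonneg (sub_nonneg.2 hxy.le) (show (0:ℝ) ≤ Y + X by linarith))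
    nlinarith [h]
  have c8 : X * Y ^ 4 ≤ 0.158 * (X * Y ^ 3) := by
    have h := mul_nonneg (mul_nonneg hx0.le (mul_nonneg hy0.le (sq_nonneg Y))) (sub_nonneg.2 hyb)
    nlinarith [h]
  have c9 : X ^ 4 * Y ≤ 0.158 * (X ^ 3 * Y) := by
    have h := mul_nonneg (mul_nonneg (mul_nonneg hx0.le (sq_nonneg X)) hy0.le) (sub_nonneg.2 hxb)
    nlinarith [h]
  have q1 : (0:ℝ) ≤ X ^ 3 * Y ^ 3 := by positivity
  have q2 : (0:ℝ) ≤ X ^ 3 * Y ^ 4 := by positivity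
  have q3 : (0:ℝ) ≤ X ^ 4 * Y ^ 3 := by positivity
  have q4 : (0:ℝ) ≤ X ^ 4 * Y ^ 4 := by positivity
  have q5 : (0:ℝ) ≤ X ^ 3 * Y ^ 2 := by positivity
  have q6 : (0:ℝ) ≤ X ^ 4 * Y ^ 2 := by positivity
  have hpoly : 2 * (Y - Y ^ 3 / 6 + 5 / 96 * Y ^ 4)
      - 2 * ((1 - Y ^ 2 / 2) * (X - X ^ 3 / 6 - 5 / 96 * X ^ 4))
      < 1.4641016 * ((X - X ^ 3 / 6 - 5 / 96 * X ^ 4) * (Y - Y ^ 3 / 6 - 5 / 96 * Y ^ 4)) := by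
    linarith [hrel2, c1, c2, c3, c4, c5, c6, c7, c8, c9, q1, q2, q3, q4, q5, q6,
      mul_pos hx0 hy0]
  calc 2 * Real.sin Y - 2 * (Real.cos Y * Real.sin X)
      ≤ 2 * (Y - Y ^ 3 / 6 + 5 / 96 * Y ^ 4)
        - 2 * ((1 - Y ^ 2 / 2) * (X - X ^ 3 / 6 - 5 / 96 * X ^ 4)) := by
        linarith [hs2u, hstep1]
    _ < 1.4641016 * ((X - X ^ 3 / 6 - 5 / 96 * X ^ 4) * (Y - Y ^ 3 / 6 - 5 / 96 * Y ^ 4)) :=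
        hpoly
    _ ≤ (2 * Real.sqrt 3 - 2) * (Real.sin X * Real.sin Y) := hstep3

set_option maxHeartbeats 3200000 in
theorem stmt10 (n : ℤ) (hn : 22 ≤ n) :
    2 * (1 / Real.sin (π / ((n : ℝ) - 4))) - 2 * Real.cot (π / ((n : ℝ) - 6)) <
      2 * Real.sqrt 3 - 2 := by
  have hpl := Real.pi_gt_d6
  have hph := Real.pi_lt_d6
  have pipos := Real.pi_pos
  rcases lt_or_ge n 26 with h26 | h26
  · interval_cases n
    · -- n = 22 : x = π/18, y = π/16, via half angles π/36, π/32
      have e1 : ((22 : ℤ) : ℝ) - 4 = 18 := by norm_num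
      have e2 : ((22 : ℤ) : ℝ) - 6 = 16 := by norm_num
      rw [e1, e2]
      apply key_red (by positivity) (div_lt_self pipos (by norm_num)) (by positivity)
        (div_lt_self pipos (by norm_num))
      have hua : (0.0981747500 : ℝ) ≤ π / 32 := by linarith
      have hub : π / 32 ≤ 0.0981747813 := by linarith
      have hva : (0.0872664444 : ℝ) ≤ π / 36 := by linarith
      have hvb : π / 36 ≤ 0.0872664723 := by linarith
      have hsul : (0.0980122055 : ℝ) ≤ Real.sin (π / 32) :=
        my_sin_lb hua hub (by norm_num) (by norm_num) (by norm_num)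
      have hsuh : Real.sin (π / 32) ≤ 0.0980219137 :=
        my_sin_ub hua hub (by norm_num) (by norm_num) (by norm_num)
      have hcul : (0.9951808561 : ℝ) ≤ Real.cos (π / 32) :=
        my_cos_lb (by positivity) hub (by norm_num)
      have hcuh : Real.cos (π / 32) ≤ 0.9951856976 :=
        my_cos_ub hua hub (by norm_num) (by norm_num) (by norm_num)
      have hsvl : (0.0871526617 : ℝ) ≤ Real.sin (π / 36) :=
        my_sin_lb hva hvb (by norm_num) (by norm_num) (by norm_num)
      have hcvl : (0.9961922814 : ℝ) ≤ Real.cos (π / 36) :=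
        my_cos_lb (by positivity) hvb (by norm_num)
      have es2 : Real.sin (π / 16) = 2 * Real.sin (π / 32) * Real.cos (π / 32) := by
        rw [show (π / 16) = 2 * (π / 32) by ring, Real.sin_two_mul]
      have ec2 : Real.cos (π / 16) = 1 - 2 * Real.sin (π / 32) ^ 2 := by
        rw [show (π / 16) = 2 * (π / 32) by ring, Real.cos_two_mul]
        have := Real.sin_sq_add_cos_sq (π / 32)
        linarith
      have es1 : Real.sin (π / 18) = 2 * Real.sin (π / 36) * Real.cos (π / 36) := by
        rw [show (π / 18) = 2 * (π / 36) by ring, Real.sin_two_mul]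
      have hs1 : (0.1736416177 : ℝ) ≤ Real.sin (π / 18) := by
        rw [es1]
        have h := mul_le_mul hsvl hcvl (by norm_num) (by linarith)
        nlinarith [h]
      have hs2 : Real.sin (π / 16) ≤ (0.1951000132 : ℝ) := by
        rw [es2]
        have h := mul_le_mul hsuh hcuh (by linarith) (by norm_num)
        nlinarith [h]
      have hc2 : (0.9807834088 : ℝ) ≤ Real.cos (π / 16) := by
        rw [ec2]
        have h2 : Real.sin (π / 32) ^ 2 ≤ (0.0980219137 : ℝ) ^ 2 :=
          pow_le_pow_left₀ (by linarith) hsuh 2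
        nlinarith [h2]
      exact numeric_case hs1 hs2 hc2
        (le_of_lt (Real.sin_pos_of_pos_of_lt_pi (by positivity) (div_lt_self pipos (by norm_num))))
        (Real.sin_le_one _) (by norm_num) (by norm_num) (by norm_num)
    · -- n = 23 : x = π/19, y = π/17
      have e1 : ((23 : ℤ) : ℝ) - 4 = 19 := by norm_num
      have e2 : ((23 : ℤ) : ℝ) - 6 = 17 := by norm_num
      rw [e1, e2]
      apply key_red (by positivity) (div_lt_self pipos (by norm_num)) (by positivity)
        (div_lt_self pipos (by norm_num))
      have hxa : (0.1653469473 : ℝ) ≤ π / 19 := by linarith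
      have hxb : π / 19 ≤ 0.1653470000 := by linarith
      have hya : (0.1847995294 : ℝ) ≤ π / 17 := by linarith
      have hyb : π / 17 ≤ 0.1847995883 := by linarith
      have hs1 : (0.1645545960 : ℝ) ≤ Real.sin (π / 19) :=
        my_sin_lb hxa hxb (by norm_num) (by norm_num) (by norm_num)
      have hs2 : Real.sin (π / 17) ≤ (0.1838084890 : ℝ) :=
        my_sin_ub hya hyb (by norm_num) (by norm_num) (by norm_num)
      have hc2 : (0.9829245560 : ℝ) ≤ Real.cos (π / 17) :=
        my_cos_lb (by positivity) hyb (by norm_num)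
      exact numeric_case hs1 hs2 hc2
        (le_of_lt (Real.sin_pos_of_pos_of_lt_pi (by positivity) (div_lt_self pipos (by norm_num))))
        (Real.sin_le_one _) (by norm_num) (by norm_num) (by norm_num)
    · -- n = 24 : x = π/20, y = π/18
      have e1 : ((24 : ℤ) : ℝ) - 4 = 20 := by norm_num
      have e2 : ((24 : ℤ) : ℝ) - 6 = 18 := by norm_num
      rw [e1, e2]
      apply key_red (by positivity) (div_lt_self pipos (by norm_num)) (by positivity)
        (div_lt_self pipos (by norm_num))
      have hxa : (0.1570796000 : ℝ) ≤ π / 20 := by linarith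
      have hxb : π / 20 ≤ 0.1570796500 := by linarith
      have hya : (0.1745328888 : ℝ) ≤ π / 18 := by linarith
      have hyb : π / 18 ≤ 0.1745329445 := by linarith
      have hs1 : (0.1564019260 : ℝ) ≤ Real.sin (π / 20) :=
        my_sin_lb hxa hxb (by norm_num) (by norm_num) (by norm_num)
      have hs2 : Real.sin (π / 18) ≤ (0.1736951780 : ℝ) :=
        my_sin_ub hya hyb (by norm_num) (by norm_num) (by norm_num)
      have hc2 : (0.9847691250 : ℝ) ≤ Real.cos (π / 18) :=
        my_cos_lb (by positivity) hyb (by norm_num)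
      exact numeric_case hs1 hs2 hc2
        (le_of_lt (Real.sin_pos_of_pos_of_lt_pi (by positivity) (div_lt_self pipos (by norm_num))))
        (Real.sin_le_one _) (by norm_num) (by norm_num) (by norm_num)
    · -- n = 25 : x = π/21, y = π/19
      have e1 : ((25 : ℤ) : ℝ) - 4 = 21 := by norm_num
      have e2 : ((25 : ℤ) : ℝ) - 6 = 19 := by norm_num
      rw [e1, e2]
      apply key_red (by positivity) (div_lt_self pipos (by norm_num)) (by positivity)
        (div_lt_self pipos (by norm_num))
      have hxa : (0.1495996190 : ℝ) ≤ π / 21 := by linarith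
      have hxb : π / 21 ≤ 0.1495996667 := by linarith
      have hya : (0.1653469473 : ℝ) ≤ π / 19 := by linarith
      have hyb : π / 19 ≤ 0.1653470000 := by linarith
      have hs1 : (0.1490155230 : ℝ) ≤ Real.sin (π / 21) :=
        my_sin_lb hxa hxb (by norm_num) (by norm_num) (by norm_num)
      have hs2 : Real.sin (π / 19) ≤ (0.1646325100 : ℝ) :=
        my_sin_ub hya hyb (by norm_num) (by norm_num) (by norm_num)
      have hc2 : (0.9863301840 : ℝ) ≤ Real.cos (π / 19) :=
        my_cos_lb (by positivity) hyb (by norm_num)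
      exact numeric_case hs1 hs2 hc2
        (le_of_lt (Real.sin_pos_of_pos_of_lt_pi (by positivity) (div_lt_self pipos (by norm_num))))
        (Real.sin_le_one _) (by norm_num) (by norm_num) (by norm_num)
  · -- general case n ≥ 26
    have hn26 : (26 : ℝ) ≤ (n : ℝ) := by exact_mod_cast h26
    have ha0 : (0 : ℝ) < (n : ℝ) - 4 := by linarith
    have hb0 : (0 : ℝ) < (n : ℝ) - 6 := by linarith
    have hx0 : 0 < π / ((n : ℝ) - 4) := div_pos pipos ha0
    have hy0 : 0 < π / ((n : ℝ) - 6) := div_pos pipos hb0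
    apply key_red hx0 (div_lt_self pipos (by linarith)) hy0 (div_lt_self pipos (by linarith))
    have hxy : π / ((n : ℝ) - 4) < π / ((n : ℝ) - 6) :=
      div_lt_div_of_pos_left pipos hb0 (by linarith)
    have hyb : π / ((n : ℝ) - 6) ≤ 0.158 := by
      rw [div_le_iff₀ hb0]
      nlinarith
    have hrel : π * (π / ((n : ℝ) - 6) - π / ((n : ℝ) - 4)) =
        2 * (π / ((n : ℝ) - 4) * (π / ((n : ℝ) - 6))) := by
      have h4 : ((n:ℝ) - 4) ≠ 0 := ne_of_gt ha0
      have h6 : ((n:ℝ) - 6) ≠ 0 := ne_of_gt hb0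
      field_simp
      ring
    exact general_ineq hx0 hxy hyb hrel
end

section
/- Let n > 4 be an even integer. For even integers m with 2 ≤ m ≤ n−2, define F(m) = 2·csc(π/m) + 2·cot(π/(n−m)). Then F is strictly decreasing: for even m₁ < m₂ in [2, n−2], F(m₁) > F(m₂). -/
open Real

lemma aux_key13 {u : ℝ} (h0 : 0 < u) (h1 : u < π / 2) :
    u ^ 2 * Real.cos u < Real.sin u ^ 2 := by
  have hπ := Real.pi_pos
  set g : ℝ → ℝ := fun t => Real.sin t ^ 2 / Real.cos t - t ^ 2 with hg
  have hcos : ∀ t ∈ Set.Icc (0:ℝ) u, 0 < Real.cos t := by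
    intro t ht
    exact Real.cos_pos_of_mem_Ioo ⟨by linarith [ht.1], by linarith [ht.2]⟩
  have hcont : ContinuousOn g (Set.Icc 0 u) := by
    apply ContinuousOn.sub
    · exact ((Real.continuous_sin.pow 2).continuousOn).div
        Real.continuous_cos.continuousOn (fun t ht => (hcos t ht).ne')
    · exact (continuous_pow 2).continuousOn
  have hd : ∀ t ∈ interior (Set.Icc (0:ℝ) u), 0 < deriv g t := by
    intro t ht
    rw [interior_Icc] at ht
    obtain ⟨ht0, htu⟩ := ht
    have hct : 0 < Real.cos t := hcos t ⟨ht0.le, htu.le⟩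
    have hst : 0 < Real.sin t := Real.sin_pos_of_pos_of_lt_pi ht0 (by linarith)
    have Hd : HasDerivAt g
        ((2 * Real.sin t ^ 1 * Real.cos t * Real.cos t - Real.sin t ^ 2 * (-Real.sin t)) /
          Real.cos t ^ 2 - (2:ℕ) * t ^ 1) t := by
      exact (((Real.hasDerivAt_sin t).pow 2).div (Real.hasDerivAt_cos t) hct.ne').sub
        (hasDerivAt_pow 2 t)
    rw [Hd.deriv]
    have htan : t < Real.tan t := Real.lt_tan ht0 (by linarith)
    rw [Real.tan_eq_sin_div_cos] at htan
    have h1' : t * Real.cos t < Real.sin t := (lt_div_iff₀ hct).mp htan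
    have hA : 0 ≤ Real.sin t * (1 - Real.cos t) ^ 2 := by positivity
    have hB : 0 < (Real.sin t - t * Real.cos t) * Real.cos t :=
      mul_pos (by linarith) hct
    have hs3 : Real.sin t ^ 3 = Real.sin t - Real.sin t * Real.cos t ^ 2 := by
      linear_combination Real.sin t * (Real.sin_sq_add_cos_sq t)
    have hc2 : 0 < Real.cos t ^ 2 := by positivity
    rw [sub_pos, lt_div_iff₀ hc2]
    push_cast
    nlinarith [hA, hB, hs3]
  have hmono : StrictMonoOn g (Set.Icc 0 u) :=
    strictMonoOn_of_deriv_pos (convex_Icc _ _) hcont hd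
  have h0m : (0:ℝ) ∈ Set.Icc (0:ℝ) u := ⟨le_refl _, h0.le⟩
  have hum : u ∈ Set.Icc (0:ℝ) u := ⟨h0.le, le_refl _⟩
  have := hmono h0m hum h0
  have hg0 : g 0 = 0 := by simp [hg]
  have hgu : 0 < Real.sin u ^ 2 / Real.cos u - u ^ 2 := by
    rw [← hg0]; exact this
  have hcu : 0 < Real.cos u := hcos u hum
  have : u ^ 2 < Real.sin u ^ 2 / Real.cos u := by linarith
  calc u ^ 2 * Real.cos u < (Real.sin u ^ 2 / Real.cos u) * Real.cos u :=
        mul_lt_mul_of_pos_right this hcu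
    _ = Real.sin u ^ 2 := by field_simp

set_option maxHeartbeats 1000000 in
theorem stmt13 (n : ℤ) (hne : Even n) (hn : 4 < n)
    (m₁ m₂ : ℤ) (hm₁e : Even m₁) (hm₂e : Even m₂)
    (h2 : 2 ≤ m₁) (hlt : m₁ < m₂) (hub : m₂ ≤ n - 2) :
    2 * (1 / Real.sin (π / (m₁ : ℝ))) + 2 * Real.cot (π / ((n : ℝ) - (m₁ : ℝ))) >
      2 * (1 / Real.sin (π / (m₂ : ℝ))) + 2 * Real.cot (π / ((n : ℝ) - (m₂ : ℝ))) := by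
  have hπ := Real.pi_pos
  have hn6 : (6:ℤ) ≤ n := by
    rcases hne with ⟨k, hk⟩; omega
  set c : ℝ := (n : ℝ) with hc
  have hc6 : (6:ℝ) ≤ c := by rw [hc]; exact_mod_cast hn6
  set f : ℝ → ℝ := fun x =>
    2 * (Real.sin (π / x))⁻¹ + 2 * (Real.cos (π / (c - x)) / Real.sin (π / (c - x))) with hf
  have hsin : ∀ x : ℝ, 2 ≤ x → 0 < Real.sin (π / x) := by
    intro x hx
    have hx0 : (0:ℝ) < x := by linarith
    apply Real.sin_pos_of_pos_of_lt_pi (by positivity)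
    have : π / x ≤ π / 2 := div_le_div_of_nonneg_left hπ.le two_pos hx |>.trans_eq rfl
    linarith
  set s : Set ℝ := Set.Icc 2 (c - 2) with hs
  have hxne : ∀ x ∈ s, x ≠ 0 := fun x hx => by
    have := hx.1; intro h; rw [h] at this; linarith
  have hcxne : ∀ x ∈ s, c - x ≠ 0 := fun x hx => by
    have := hx.2; intro h; linarith [hx.2]
  have hcont : ContinuousOn f s := by
    rw [hf]
    apply ContinuousOn.add
    · refine continuousOn_const.mul (ContinuousOn.inv₀ ?_ ?_)
      · exact Real.continuous_sin.comp_continuousOn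
          (continuousOn_const.div continuousOn_id hxne)
      · intro x hx; exact (hsin x hx.1).ne'
    · have hden : ContinuousOn (fun x : ℝ => π / (c - x)) s :=
        continuousOn_const.div ((continuous_const.sub continuous_id).continuousOn) hcxne
      refine continuousOn_const.mul (ContinuousOn.div
        (Real.continuous_cos.comp_continuousOn hden)
        (Real.continuous_sin.comp_continuousOn hden) ?_)
      intro x hx
      have h2cx : (2:ℝ) ≤ c - x := by linarith [hx.2]
      exact (hsin _ h2cx).ne'
  have hderiv : ∀ x ∈ interior s, deriv f x < 0 := by
    intro x hx
    rw [hs, interior_Icc] at hx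
    obtain ⟨hx2, hxc⟩ := hx
    have hx0 : (0:ℝ) < x := by linarith
    have hy2 : (2:ℝ) < c - x := by linarith
    have hy0 : (0:ℝ) < c - x := by linarith
    have hu0 : 0 < π / x := by positivity
    have huh : π / x < π / 2 := by
      rw [div_lt_div_iff₀ hx0 two_pos]; nlinarith
    have hv0 : 0 < π / (c - x) := by positivity
    have hvh : π / (c - x) < π / 2 := by
      rw [div_lt_div_iff₀ hy0 two_pos]; nlinarith
    have hsu : 0 < Real.sin (π / x) := Real.sin_pos_of_pos_of_lt_pi hu0 (by linarith)
    have hsv : 0 < Real.sin (π / (c - x)) := Real.sin_pos_of_pos_of_lt_pi hv0 (by linarith)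
    have hcu : 0 < Real.cos (π / x) := Real.cos_pos_of_mem_Ioo ⟨by linarith, huh⟩
    -- derivatives
    have d1 : HasDerivAt (fun y : ℝ => π / y) (-π / x ^ 2) x := by
      exact ((hasDerivAt_const x π).div (hasDerivAt_id x) hx0.ne').congr_deriv (by simp)
    have d2 : HasDerivAt (fun y : ℝ => Real.sin (π / y))
        (Real.cos (π / x) * (-π / x ^ 2)) x := (Real.hasDerivAt_sin (π / x)).comp x d1
    have d3 : HasDerivAt (fun y : ℝ => (Real.sin (π / y))⁻¹)
        (-(Real.cos (π / x) * (-π / x ^ 2)) / Real.sin (π / x) ^ 2) x := d2.inv hsu.ne'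
    have e1 : HasDerivAt (fun y : ℝ => c - y) (-1) x := (hasDerivAt_id x).const_sub c
    have e2 : HasDerivAt (fun y : ℝ => π / (c - y)) (π / (c - x) ^ 2) x := by
      have := (hasDerivAt_const x π).div e1 hy0.ne'
      exact this.congr_deriv (by simp)
    have e3 : HasDerivAt (fun y : ℝ => Real.cos (π / (c - y)))
        (-Real.sin (π / (c - x)) * (π / (c - x) ^ 2)) x :=
      by have := (Real.hasDerivAt_cos (π / (c - x))).comp x e2; exact this
    have e4 : HasDerivAt (fun y : ℝ => Real.sin (π / (c - y)))
        (Real.cos (π / (c - x)) * (π / (c - x) ^ 2)) x :=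
      by have := (Real.hasDerivAt_sin (π / (c - x))).comp x e2; exact this
    have e5 : HasDerivAt (fun y : ℝ => Real.cos (π / (c - y)) / Real.sin (π / (c - y)))
        ((-Real.sin (π / (c - x)) * (π / (c - x) ^ 2) * Real.sin (π / (c - x)) -
          Real.cos (π / (c - x)) * (Real.cos (π / (c - x)) * (π / (c - x) ^ 2))) /
          Real.sin (π / (c - x)) ^ 2) x := e3.div e4 hsv.ne'
    have dF : HasDerivAt f
        (2 * (-(Real.cos (π / x) * (-π / x ^ 2)) / Real.sin (π / x) ^ 2) +
         2 * ((-Real.sin (π / (c - x)) * (π / (c - x) ^ 2) * Real.sin (π / (c - x)) -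
          Real.cos (π / (c - x)) * (Real.cos (π / (c - x)) * (π / (c - x) ^ 2))) /
          Real.sin (π / (c - x)) ^ 2)) x := by
      rw [hf]
      exact (d3.const_mul 2).add (e5.const_mul 2)
    rw [dF.deriv]
    -- key inequalities
    have key1 : (π / x) ^ 2 * Real.cos (π / x) < Real.sin (π / x) ^ 2 := aux_key13 hu0 huh
    have key2 : Real.sin (π / (c - x)) < π / (c - x) := Real.sin_lt hv0
    have hux : (π / x) * x = π := div_mul_cancel₀ π hx0.ne'
    have hvx : (π / (c - x)) * (c - x) = π := div_mul_cancel₀ π hy0.ne'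
    have hA : π ^ 2 * Real.cos (π / x) < x ^ 2 * Real.sin (π / x) ^ 2 := by
      have h := mul_lt_mul_of_pos_left key1 (by positivity : (0:ℝ) < x ^ 2)
      have heq : x ^ 2 * ((π / x) ^ 2 * Real.cos (π / x)) = π ^ 2 * Real.cos (π / x) := by
        field_simp
      rw [← heq]; exact h
    have hB : (c - x) ^ 2 * Real.sin (π / (c - x)) ^ 2 < π ^ 2 := by
      have h1 : Real.sin (π / (c - x)) * (c - x) < π := by
        have := mul_lt_mul_of_pos_right key2 hy0
        rw [hvx] at this; exact this
      have h2 : 0 < Real.sin (π / (c - x)) * (c - x) := mul_pos hsv hy0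
      nlinarith [mul_lt_mul'' h1 h1 h2.le h2.le]
    have hApos : 0 < x ^ 2 * Real.sin (π / x) ^ 2 := by positivity
    have hBpos : 0 < (c - x) ^ 2 * Real.sin (π / (c - x)) ^ 2 := by positivity
    have hmain : Real.cos (π / x) * ((c - x) ^ 2 * Real.sin (π / (c - x)) ^ 2) <
        x ^ 2 * Real.sin (π / x) ^ 2 := by
      calc Real.cos (π / x) * ((c - x) ^ 2 * Real.sin (π / (c - x)) ^ 2)
          < Real.cos (π / x) * π ^ 2 := mul_lt_mul_of_pos_left hB hcu
        _ < x ^ 2 * Real.sin (π / x) ^ 2 := by linarith [hA]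
    -- simplify second numerator using Pythagoras
    have hnum : -Real.sin (π / (c - x)) * (π / (c - x) ^ 2) * Real.sin (π / (c - x)) -
        Real.cos (π / (c - x)) * (Real.cos (π / (c - x)) * (π / (c - x) ^ 2)) =
        -(π / (c - x) ^ 2) := by
      linear_combination (-(π / (c - x) ^ 2)) * (Real.sin_sq_add_cos_sq (π / (c - x)))
    rw [hnum]
    have h1 : 2 * (-(Real.cos (π / x) * (-π / x ^ 2)) / Real.sin (π / x) ^ 2) =
        2 * π * Real.cos (π / x) / (x ^ 2 * Real.sin (π / x) ^ 2) := by
      field_simp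
    have h2 : 2 * (-(π / (c - x) ^ 2) / Real.sin (π / (c - x)) ^ 2) =
        -(2 * π / ((c - x) ^ 2 * Real.sin (π / (c - x)) ^ 2)) := by
      field_simp
    rw [h1, h2, ← sub_eq_add_neg, sub_neg]
    rw [div_lt_div_iff₀ hApos hBpos]
    have hfin := mul_lt_mul_of_pos_left hmain (show (0:ℝ) < 2 * π by positivity)
    linarith [hfin]
  have hanti : StrictAntiOn f s :=
    strictAntiOn_of_deriv_neg (convex_Icc _ _) hcont hderiv
  have hm1s : ((m₁ : ℝ)) ∈ s := by
    constructor
    · exact_mod_cast h2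
    · have : (m₁ : ℝ) ≤ (n : ℝ) - 2 := by exact_mod_cast (by omega : m₁ ≤ n - 2)
      rw [hc]; exact this
  have hm2s : ((m₂ : ℝ)) ∈ s := by
    constructor
    · have : (2:ℤ) ≤ m₂ := by omega
      exact_mod_cast this
    · have : (m₂ : ℝ) ≤ (n : ℝ) - 2 := by exact_mod_cast hub
      rw [hc]; exact this
  have hltR : (m₁ : ℝ) < (m₂ : ℝ) := by exact_mod_cast hlt
  have hres := hanti hm1s hm2s hltR
  rw [hf] at hres
  simp only at hres
  rw [gt_iff_lt, Real.cot_eq_cos_div_sin, Real.cot_eq_cos_div_sin, one_div, one_div]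
  exact hres
end
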